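/- Let N be a positive integer, δ₀ > 0, and let A(t) be a real diagonal N×N matrix whose diagonal entries a_j(t) are C¹ functions on the interval I = (−1,1) satisfying a_j'(t) ≥ δ₀ for all j = 1,…,N and all t ∈ I. Let B(t) be a Hermitian N×N matrix depending C¹ on t ∈ I with ‖B'(t)‖ ≤ δ₀/2 (operator norm) for all t ∈ I. Then there is a numerical constant C (independent of N, δ₀, ε, A, B) such that for every ε > 0, the set of t ∈ I at which A(t)+B(t) fails to be invertible or satisfies ‖(A(t)+B(t))^{-1}‖ > 1/ε has Lebesgue measure at most C·N·ε/δ₀. -/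

import Mathlib

set_option maxHeartbeats 1000000
set_option synthInstance.maxHeartbeats 1000000

open Set

/-- Operator norm of a complex `N×N` matrix with respect to the Euclidean norm on `ℂ^N`. -/
noncomputable def euclideanOpNorm {N : ℕ} (M : Matrix (Fin N) (Fin N) ℂ) : ℝ :=
  ‖Matrix.toEuclideanCLM (𝕜 := ℂ) M‖

namespace Lem52

open Matrix Finset

variable {N : ℕ}

local notation "E" => EuclideanSpace ℂ (Fin N)

lemma herm_sa {A : Matrix (Fin N) (Fin N) ℂ} (hA : A.IsHermitian) :
    _root_.IsSelfAdjoint (Matrix.toEuclideanCLM (𝕜 := ℂ) A) := by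
  rw [_root_.IsSelfAdjoint, ← map_star]
  exact congrArg _ hA

lemma clm_apply_eigenvectorBasis {A : Matrix (Fin N) (Fin N) ℂ} (hA : A.IsHermitian) (j : Fin N) :
    Matrix.toEuclideanCLM (𝕜 := ℂ) A (hA.eigenvectorBasis j) =
      (hA.eigenvalues j : ℂ) • hA.eigenvectorBasis j := by
  apply (WithLp.equiv 2 (Fin N → ℂ)).injective
  simp only [WithLp.equiv_apply, Matrix.ofLp_toEuclideanCLM, Matrix.toLin'_apply]
  have := hA.mulVec_eigenvectorBasis j
  ext i
  have h2 := congrFun this i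
  simp only [Pi.smul_apply] at h2 ⊢
  simpa using h2

lemma repr_clm_apply {A : Matrix (Fin N) (Fin N) ℂ} (hA : A.IsHermitian) (v : E) (j : Fin N) :
    hA.eigenvectorBasis.repr (Matrix.toEuclideanCLM (𝕜 := ℂ) A v) j =
      (hA.eigenvalues j : ℂ) * hA.eigenvectorBasis.repr v j := by
  rw [hA.eigenvectorBasis.repr_apply_apply, hA.eigenvectorBasis.repr_apply_apply,
    ← ContinuousLinearMap.adjoint_inner_left, (herm_sa hA).adjoint_eq,
    clm_apply_eigenvectorBasis hA j, inner_smul_left]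
  simp

lemma re_inner_form {A : Matrix (Fin N) (Fin N) ℂ} (hA : A.IsHermitian) (v : E) :
    RCLike.re (inner (𝕜 := ℂ) (Matrix.toEuclideanCLM (𝕜 := ℂ) A v) v) =
      ∑ j, hA.eigenvalues j * ‖hA.eigenvectorBasis.repr v j‖^2 := by
  rw [← hA.eigenvectorBasis.repr.inner_map_map, PiLp.inner_apply, map_sum]
  congr 1
  ext j
  rw [repr_clm_apply]
  simp [RCLike.inner_apply]
  ring_nf
  rw [Complex.sq_norm, Complex.normSq_apply]
  ring

lemma repr_zero_of_notmem (b : OrthonormalBasis (Fin N) ℂ E) (P : Finset (Fin N)) (v : E)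
    (hv : v ∈ Submodule.span ℂ (b '' ↑P)) {j : Fin N} (hj : j ∉ P) :
    b.repr v j = 0 := by
  have : Submodule.span ℂ (b '' ↑P) ≤ LinearMap.ker ((innerSL ℂ (b j)).toLinearMap) := by
    rw [Submodule.span_le]
    rintro x ⟨k, hk, rfl⟩
    simp only [SetLike.mem_coe, LinearMap.mem_ker, ContinuousLinearMap.coe_coe, innerSL_apply_apply]
    exact b.orthonormal.2 (fun h => hj (h ▸ hk))
  have h0 := this hv
  simp only [LinearMap.mem_ker, ContinuousLinearMap.coe_coe, innerSL_apply_apply] at h0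
  rw [b.repr_apply_apply]
  exact h0

lemma finrank_span_eigen (b : OrthonormalBasis (Fin N) ℂ E) (P : Finset (Fin N)) :
    Module.finrank ℂ (Submodule.span ℂ (b '' ↑P)) = P.card := by
  have hli : LinearIndependent ℂ (fun p : P => b p) :=
    b.orthonormal.linearIndependent.comp Subtype.val Subtype.val_injective
  have : b '' ↑P = Set.range (fun p : P => b p) := by
    rw [Set.image_eq_range]; rfl
  rw [this, finrank_span_eq_card hli, Fintype.card_coe]

lemma norm_sq_eq_sum_repr (b : OrthonormalBasis (Fin N) ℂ E) (v : E) :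
    ‖v‖^2 = ∑ j, ‖b.repr v j‖^2 := by
  rw [← b.repr.norm_map v, EuclideanSpace.norm_eq, Real.sq_sqrt]
  positivity

theorem count_le {X Y : Matrix (Fin N) (Fin N) ℂ} (hX : X.IsHermitian) (hY : Y.IsHermitian)
    (c α : ℝ)
    (h : ∀ v : E, RCLike.re (inner (𝕜 := ℂ) (Matrix.toEuclideanCLM (𝕜 := ℂ) Y v) v) + c * ‖v‖^2 ≤
      RCLike.re (inner (𝕜 := ℂ) (Matrix.toEuclideanCLM (𝕜 := ℂ) X v) v)) :
    (Finset.univ.filter fun j => hX.eigenvalues j ≤ α).card ≤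
      (Finset.univ.filter fun j => hY.eigenvalues j ≤ α - c).card := by
  by_contra hlt
  push_neg at hlt
  set P := Finset.univ.filter fun j => hX.eigenvalues j ≤ α with hP
  set Q := Finset.univ.filter fun j => α - c < hY.eigenvalues j with hQ
  have hQcard : (Finset.univ.filter fun j => hY.eigenvalues j ≤ α - c).card + Q.card = N := by
    have he : Q = Finset.univ.filter fun j => ¬ hY.eigenvalues j ≤ α - c := by
      rw [hQ]; simp [not_le]
    rw [he, Finset.card_filter_add_card_filter_not]
    simp
  set U := Submodule.span ℂ (hX.eigenvectorBasis '' ↑P)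
  set V := Submodule.span ℂ (hY.eigenvectorBasis '' ↑Q)
  have hdim : 0 < Module.finrank ℂ (U ⊓ V : Submodule ℂ E) := by
    have h1 := Submodule.finrank_sup_add_finrank_inf_eq U V
    have h2 : Module.finrank ℂ (U ⊔ V : Submodule ℂ E) ≤ N := by
      have := Submodule.finrank_le (U ⊔ V)
      simpa [finrank_euclideanSpace] using this
    have h3 : Module.finrank ℂ U = P.card := finrank_span_eigen _ _
    have h4 : Module.finrank ℂ V = Q.card := finrank_span_eigen _ _
    omega
  obtain ⟨v, hv, hvne⟩ : ∃ v : E, v ∈ (U ⊓ V : Submodule ℂ E) ∧ v ≠ 0 := by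
    have : (U ⊓ V : Submodule ℂ E) ≠ ⊥ := by
      intro hbot
      rw [hbot] at hdim
      simp at hdim
    exact Submodule.exists_mem_ne_zero_of_ne_bot this
  have hvU : v ∈ U := hv.1
  have hvV : v ∈ V := hv.2
  have hXle : RCLike.re (inner (𝕜 := ℂ) (Matrix.toEuclideanCLM (𝕜 := ℂ) X v) v) ≤ α * ‖v‖^2 := by
    rw [re_inner_form hX, norm_sq_eq_sum_repr hX.eigenvectorBasis, Finset.mul_sum]
    apply Finset.sum_le_sum
    intro j _
    by_cases hj : j ∈ P
    · have : hX.eigenvalues j ≤ α := by simpa [hP] using hj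
      nlinarith [sq_nonneg ‖hX.eigenvectorBasis.repr v j‖]
    · rw [repr_zero_of_notmem hX.eigenvectorBasis P v hvU hj]
      simp
  have hYgt : (α - c) * ‖v‖^2 <
      RCLike.re (inner (𝕜 := ℂ) (Matrix.toEuclideanCLM (𝕜 := ℂ) Y v) v) := by
    rw [re_inner_form hY, norm_sq_eq_sum_repr hY.eigenvectorBasis, Finset.mul_sum]
    obtain ⟨j₀, hj₀⟩ : ∃ j₀, hY.eigenvectorBasis.repr v j₀ ≠ 0 := by
      by_contra hall
      push_neg at hall
      apply hvne
      apply hY.eigenvectorBasis.repr.map_eq_zero_iff.mp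
      ext j
      exact hall j
    have hj₀Q : j₀ ∈ Q := by
      by_contra hn
      exact hj₀ (repr_zero_of_notmem hY.eigenvectorBasis Q v hvV hn)
    apply Finset.sum_lt_sum
    · intro j _
      by_cases hj : j ∈ Q
      · have : α - c < hY.eigenvalues j := by simpa [hQ] using hj
        nlinarith [sq_nonneg ‖hY.eigenvectorBasis.repr v j‖]
      · rw [repr_zero_of_notmem hY.eigenvectorBasis Q v hvV hj]; simp
    · refine ⟨j₀, Finset.mem_univ _, ?_⟩
      have h1 : α - c < hY.eigenvalues j₀ := by simpa [hQ] using hj₀Q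
      have h2 : 0 < ‖hY.eigenvectorBasis.repr v j₀‖^2 := pow_pos (norm_pos_iff.mpr hj₀) 2
      nlinarith
  have := h v
  nlinarith

theorem exists_small_eig {X : Matrix (Fin N) (Fin N) ℂ} (hX : X.IsHermitian)
    {ε : ℝ} (hε : 0 < ε)
    (h : ¬ IsUnit X ∨ 1 / ε < euclideanOpNorm X⁻¹) :
    ∃ j, |hX.eigenvalues j| ≤ ε := by
  by_cases hu : IsUnit X
  · have hnorm : 1 / ε < euclideanOpNorm X⁻¹ := h.resolve_left (not_not.mpr hu)
    obtain ⟨v, hv⟩ : ∃ v : E, (1/ε) * ‖v‖ < ‖Matrix.toEuclideanCLM (𝕜 := ℂ) X⁻¹ v‖ := by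
      by_contra hall
      push_neg at hall
      have := ContinuousLinearMap.opNorm_le_bound _ (by positivity : (0:ℝ) ≤ 1/ε)
        (fun v => hall v)
      exact absurd hnorm (not_lt.mpr this)
    set w := Matrix.toEuclideanCLM (𝕜 := ℂ) X⁻¹ v with hw
    have hXw : Matrix.toEuclideanCLM (𝕜 := ℂ) X w = v := by
      have h0 : Matrix.toEuclideanCLM (𝕜 := ℂ) X (Matrix.toEuclideanCLM (𝕜 := ℂ) X⁻¹ v) =
          (Matrix.toEuclideanCLM (𝕜 := ℂ) X * Matrix.toEuclideanCLM (𝕜 := ℂ) X⁻¹) v := rfl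
      rw [hw, h0, ← _root_.map_mul,
        Matrix.mul_nonsing_inv X ((Matrix.isUnit_iff_isUnit_det X).mp hu), _root_.map_one]
      rfl
    have hwpos : 0 < ‖w‖ := lt_of_le_of_lt (by positivity) hv
    have hTw : ‖Matrix.toEuclideanCLM (𝕜 := ℂ) X w‖ < ε * ‖w‖ := by
      rw [hXw]
      calc ‖v‖ = ε * ((1/ε) * ‖v‖) := by field_simp
      _ < ε * ‖w‖ := by exact (mul_lt_mul_iff_right₀ hε).mpr hv
    by_contra hc
    push_neg at hc
    have key : ε^2 * ‖w‖^2 ≤ ‖Matrix.toEuclideanCLM (𝕜 := ℂ) X w‖^2 := by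
      have hterm : ∀ j : Fin N, ε^2 * ‖hX.eigenvectorBasis.repr w j‖^2 ≤
          ‖hX.eigenvectorBasis.repr (Matrix.toEuclideanCLM (𝕜 := ℂ) X w) j‖^2 := by
        intro j
        rw [repr_clm_apply hX w j, norm_mul, mul_pow, Complex.norm_real, Real.norm_eq_abs]
        have h1 : ε < |hX.eigenvalues j| := hc j
        exact mul_le_mul_of_nonneg_right (by nlinarith) (sq_nonneg _)
      calc ε^2 * ‖w‖^2 = ∑ j, ε^2 * ‖hX.eigenvectorBasis.repr w j‖^2 := by
            rw [norm_sq_eq_sum_repr hX.eigenvectorBasis w, Finset.mul_sum]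
      _ ≤ ∑ j, ‖hX.eigenvectorBasis.repr (Matrix.toEuclideanCLM (𝕜 := ℂ) X w) j‖^2 :=
            Finset.sum_le_sum fun j _ => hterm j
      _ = ‖Matrix.toEuclideanCLM (𝕜 := ℂ) X w‖^2 :=
            (norm_sq_eq_sum_repr hX.eigenvectorBasis _).symm
    nlinarith [norm_nonneg (Matrix.toEuclideanCLM (𝕜 := ℂ) X w)]
  · have hdet : X.det = 0 := by
      by_contra hd
      exact hu ((Matrix.isUnit_iff_isUnit_det X).mpr (isUnit_iff_ne_zero.mpr hd))
    rw [hX.det_eq_prod_eigenvalues] at hdet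
    obtain ⟨j, -, hj⟩ := Finset.prod_eq_zero_iff.mp hdet
    refine ⟨j, ?_⟩
    have h0 : hX.eigenvalues j = 0 := Complex.ofReal_eq_zero.mp hj
    rw [h0]
    simpa using hε.le

noncomputable def clmOfFun : (Fin N → Fin N → ℂ) →ₗ[ℝ] (E →L[ℂ] E) where
  toFun g := Matrix.toEuclideanCLM (𝕜 := ℂ) (Matrix.of g)
  map_add' g h := by
    show Matrix.toEuclideanCLM (𝕜 := ℂ) (Matrix.of g + Matrix.of h) = _
    rw [map_add]
  map_smul' r g := by
    show Matrix.toEuclideanCLM (𝕜 := ℂ) (r • Matrix.of g)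
      = r • Matrix.toEuclideanCLM (𝕜 := ℂ) (Matrix.of g)
    rw [← algebraMap_smul ℂ r (Matrix.of g), _root_.map_smul]
    exact algebraMap_smul ℂ r (Matrix.toEuclideanCLM (𝕜 := ℂ) (Matrix.of g))

lemma hasDerivAt_clm (B B' : ℝ → Matrix (Fin N) (Fin N) ℂ) (t : ℝ)
    (hB : ∀ i j, HasDerivAt (fun s => B s i j) (B' t i j) t) :
    HasDerivAt (fun s => Matrix.toEuclideanCLM (𝕜 := ℂ) (B s))
      (Matrix.toEuclideanCLM (𝕜 := ℂ) (B' t)) t := by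
  have h1 : HasDerivAt (fun s => (fun i j => B s i j)) (fun i j => B' t i j) t := by
    rw [hasDerivAt_pi]
    intro i
    rw [hasDerivAt_pi]
    intro j
    exact hB i j
  have := (clmOfFun.toContinuousLinearMap.hasFDerivAt).comp_hasDerivAt t h1
  exact this

lemma diag_form (d : Fin N → ℝ) (v : E) :
    RCLike.re (inner (𝕜 := ℂ) (Matrix.toEuclideanCLM (𝕜 := ℂ)
        (Matrix.diagonal fun j => (d j : ℂ)) v) v) = ∑ j, d j * ‖v j‖^2 := by
  rw [PiLp.inner_apply, map_sum]
  congr 1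
  ext j
  have happ : (Matrix.toEuclideanCLM (𝕜 := ℂ) (Matrix.diagonal fun j => (d j : ℂ)) v) j =
      (d j : ℂ) * v j := by
    show ((Matrix.diagonal fun j => (d j : ℂ)) *ᵥ (fun i => v i)) j = _
    rw [Matrix.mulVec_diagonal]
  rw [happ]
  simp [RCLike.inner_apply]
  ring_nf
  rw [Complex.sq_norm, Complex.normSq_apply]
  ring

noncomputable def eigCount (X : Matrix (Fin N) (Fin N) ℂ) (α : ℝ) : ℕ :=
  if h : X.IsHermitian then (Finset.univ.filter fun j => h.eigenvalues j ≤ α).card else 0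

lemma eigCount_eq {X : Matrix (Fin N) (Fin N) ℂ} (h : X.IsHermitian) (α : ℝ) :
    eigCount X α = (Finset.univ.filter fun j => h.eigenvalues j ≤ α).card := dif_pos h

lemma eigCount_le (X : Matrix (Fin N) (Fin N) ℂ) (α : ℝ) : eigCount X α ≤ N := by
  unfold eigCount
  split
  · exact le_trans (Finset.card_filter_le _ _) (by simp)
  · exact Nat.zero_le _

end Lem52

/-- Lemma 5.2 of the paper: let `A(t)` be a real diagonal `N×N` matrix whose diagonal
entries `a_j` are `C¹` on `I = (−1,1)` with `a_j'(t) ≥ δ₀ > 0`, and let `B(t)` be a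
Hermitian `N×N` matrix, `C¹` in `t ∈ I`, with `‖B'(t)‖ ≤ δ₀/2`.  Then there is a
numerical constant `C` (independent of `N, δ₀, ε, A, B`) such that for every `ε > 0`
the set of `t ∈ I` where `A(t)+B(t)` is not invertible or `‖(A(t)+B(t))⁻¹‖ > 1/ε`
has Lebesgue measure at most `C N ε / δ₀`. -/
theorem stmt_0 :
    ∃ C : ℝ, 0 < C ∧
      ∀ (N : ℕ) (δ₀ : ℝ), 0 < δ₀ →
      ∀ (a a' : Fin N → ℝ → ℝ) (B B' : ℝ → Matrix (Fin N) (Fin N) ℂ),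
        (∀ j, ∀ t ∈ Ioo (-1 : ℝ) 1, HasDerivAt (a j) (a' j t) t) →
        (∀ j, ContinuousOn (a' j) (Ioo (-1 : ℝ) 1)) →
        (∀ j, ∀ t ∈ Ioo (-1 : ℝ) 1, δ₀ ≤ a' j t) →
        (∀ i j, ∀ t ∈ Ioo (-1 : ℝ) 1, HasDerivAt (fun s => B s i j) (B' t i j) t) →
        (∀ i j, ContinuousOn (fun t => B' t i j) (Ioo (-1 : ℝ) 1)) →
        (∀ t ∈ Ioo (-1 : ℝ) 1, (B t).IsHermitian) →
        (∀ t ∈ Ioo (-1 : ℝ) 1, euclideanOpNorm (B' t) ≤ δ₀ / 2) →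
        ∀ ε : ℝ, 0 < ε →
          MeasureTheory.volume
            {t ∈ Ioo (-1 : ℝ) 1 |
              ¬ IsUnit (Matrix.diagonal (fun j => ((a j t : ℝ) : ℂ)) + B t) ∨
              1 / ε < euclideanOpNorm ((Matrix.diagonal (fun j => ((a j t : ℝ) : ℂ)) + B t)⁻¹)}
            ≤ ENNReal.ofReal (C * N * ε / δ₀) := by
  classical
  refine ⟨16, by norm_num, ?_⟩
  intro N δ₀ hδ a a' B B' hda hca hδle hdB hcB hherm hnB ε hε
  let M : ℝ → Matrix (Fin N) (Fin N) ℂ :=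
    fun t => Matrix.diagonal (fun j => ((a j t : ℝ) : ℂ)) + B t
  change MeasureTheory.volume
      {t ∈ Ioo (-1 : ℝ) 1 | ¬ IsUnit (M t) ∨ 1 / ε < euclideanOpNorm (M t)⁻¹}
    ≤ ENNReal.ofReal (16 * N * ε / δ₀)
  set S := {t ∈ Ioo (-1 : ℝ) 1 | ¬ IsUnit (M t) ∨ 1 / ε < euclideanOpNorm (M t)⁻¹} with hSdef
  rcases Nat.eq_zero_or_pos N with hN0 | hN1
  · subst hN0
    have hSempty : S = ∅ := by
      ext t
      simp only [hSdef, Set.mem_sep_iff, Set.mem_empty_iff_false, iff_false, not_and]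
      intro _ hbad
      rcases hbad with h | h
      · exact h (by rw [Subsingleton.elim (M t) 1]; exact isUnit_one)
      · have h0 : euclideanOpNorm (M t)⁻¹ = 0 := by
          have : Matrix.toEuclideanCLM (𝕜 := ℂ) (M t)⁻¹ = 0 := Subsingleton.elim _ _
          rw [euclideanOpNorm, this, norm_zero]
        rw [h0] at h
        have : (0:ℝ) < 1/ε := by positivity
        linarith
    rw [hSempty]
    simp
  · have hMh : ∀ t ∈ Ioo (-1:ℝ) 1, (M t).IsHermitian := by
      intro t ht
      refine Matrix.IsHermitian.add ?_ (hherm t ht)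
      apply Matrix.isHermitian_diagonal_of_self_adjoint
      show star _ = _
      funext j
      simp [Pi.star_apply, Complex.star_def, Complex.conj_ofReal]
    -- quadratic form comparison
    have hcomp : ∀ t ∈ Ioo (-1:ℝ) 1, ∀ s ∈ Ioo (-1:ℝ) 1, t < s →
        ∀ v : EuclideanSpace ℂ (Fin N),
        RCLike.re (inner (𝕜 := ℂ) (Matrix.toEuclideanCLM (𝕜 := ℂ) (M t) v) v)
            + (δ₀/2*(s-t)) * ‖v‖^2 ≤
          RCLike.re (inner (𝕜 := ℂ) (Matrix.toEuclideanCLM (𝕜 := ℂ) (M s) v) v) := by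
      intro t ht s hs hts v
      have hIcc : Icc t s ⊆ Ioo (-1:ℝ) 1 :=
        fun x hx => ⟨lt_of_lt_of_le ht.1 hx.1, lt_of_le_of_lt hx.2 hs.2⟩
      have hdiag : ∀ j, δ₀ * (s - t) ≤ a j s - a j t := by
        intro j
        obtain ⟨c, hc, hceq⟩ := exists_hasDerivAt_eq_slope (a j) (a' j) hts
          (fun x hx => ((hda j x (hIcc hx)).continuousAt).continuousWithinAt)
          (fun x hx => hda j x (hIcc ⟨hx.1.le, hx.2.le⟩))
        have h1 : δ₀ ≤ a' j c := hδle j c (hIcc ⟨hc.1.le, hc.2.le⟩)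
        rw [hceq] at h1
        exact (le_div_iff₀ (by linarith)).mp h1
      have hBlip : ‖Matrix.toEuclideanCLM (𝕜 := ℂ) (B s)
          - Matrix.toEuclideanCLM (𝕜 := ℂ) (B t)‖ ≤ δ₀/2 * (s - t) := by
        have hmvt := (convex_Ioo (-1:ℝ) 1).norm_image_sub_le_of_norm_hasDerivWithin_le
          (f := fun u => Matrix.toEuclideanCLM (𝕜 := ℂ) (B u))
          (f' := fun u => Matrix.toEuclideanCLM (𝕜 := ℂ) (B' u))
          (fun x hx => (Lem52.hasDerivAt_clm B B' x
            (fun i j => hdB i j x hx)).hasDerivWithinAt)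
          (fun x hx => hnB x hx) ht hs
        have h' : ‖s - t‖ = s - t := by
          rw [Real.norm_eq_abs, abs_of_pos]; linarith
        rw [h'] at hmvt
        exact hmvt.trans (le_of_eq (by ring))
      -- split into diagonal and B parts
      have hsplit : ∀ u : ℝ,
          RCLike.re (inner (𝕜 := ℂ) (Matrix.toEuclideanCLM (𝕜 := ℂ) (M u) v) v) =
            (∑ j, a j u * ‖v j‖^2) +
            RCLike.re (inner (𝕜 := ℂ) (Matrix.toEuclideanCLM (𝕜 := ℂ) (B u) v) v) := by
        intro u
        have h1 : Matrix.toEuclideanCLM (𝕜 := ℂ) (M u) v =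
            Matrix.toEuclideanCLM (𝕜 := ℂ) (Matrix.diagonal fun j => ((a j u : ℝ) : ℂ)) v
              + Matrix.toEuclideanCLM (𝕜 := ℂ) (B u) v := by
          show Matrix.toEuclideanCLM (𝕜 := ℂ)
            (Matrix.diagonal (fun j => ((a j u : ℝ) : ℂ)) + B u) v = _
          rw [map_add]
          rfl
        rw [h1, inner_add_left, map_add, Lem52.diag_form]
      have hnormsq : ‖v‖^2 = ∑ j, ‖v j‖^2 := by
        rw [EuclideanSpace.norm_eq, Real.sq_sqrt]
        positivity
      have hdiagsum : δ₀ * (s - t) * ‖v‖^2 ≤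
          (∑ j, a j s * ‖v j‖^2) - (∑ j, a j t * ‖v j‖^2) := by
        rw [← Finset.sum_sub_distrib, hnormsq, Finset.mul_sum]
        apply Finset.sum_le_sum
        intro j _
        have := hdiag j
        nlinarith [sq_nonneg ‖v j‖]
      have hBpart : -(δ₀/2 * (s - t) * ‖v‖^2) ≤
          RCLike.re (inner (𝕜 := ℂ) (Matrix.toEuclideanCLM (𝕜 := ℂ) (B s) v) v)
            - RCLike.re (inner (𝕜 := ℂ) (Matrix.toEuclideanCLM (𝕜 := ℂ) (B t) v) v) := by
        set D := Matrix.toEuclideanCLM (𝕜 := ℂ) (B s) - Matrix.toEuclideanCLM (𝕜 := ℂ) (B t)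
          with hD
        have heq : RCLike.re (inner (𝕜 := ℂ) (Matrix.toEuclideanCLM (𝕜 := ℂ) (B s) v) v)
            - RCLike.re (inner (𝕜 := ℂ) (Matrix.toEuclideanCLM (𝕜 := ℂ) (B t) v) v)
            = RCLike.re (inner (𝕜 := ℂ) (D v) v) := by
          rw [hD, ContinuousLinearMap.sub_apply, inner_sub_left, map_sub]
        rw [heq]
        have h1 := norm_inner_le_norm (𝕜 := ℂ) (D v) v
        have h2 := D.le_opNorm v
        have h3 : |RCLike.re (inner (𝕜 := ℂ) (D v) v)| ≤ ‖(inner (𝕜 := ℂ) (D v) v : ℂ)‖ :=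
          RCLike.abs_re_le_norm _
        have h4 : ‖D‖ ≤ δ₀/2 * (s - t) := hBlip
        have h5 := abs_le.mp h3
        have h6 : ‖D v‖ * ‖v‖ ≤ (δ₀/2 * (s-t)) * (‖v‖ * ‖v‖) := by
          nlinarith [norm_nonneg v, norm_nonneg (D v), ContinuousLinearMap.opNorm_nonneg D]
        have h7 : ‖v‖ * ‖v‖ = ‖v‖^2 := by ring
        nlinarith
      have h8 := hsplit s
      have h9 := hsplit t
      nlinarith [hdiagsum, hBpart]
    -- the step claim
    have hstep : ∀ t ∈ S, ∀ s ∈ S, t < s → 4*ε/δ₀ < s - t →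
        Lem52.eigCount (M s) ε < Lem52.eigCount (M t) ε := by
      intro t htS s hsS hts hgap
      have htI : t ∈ Ioo (-1:ℝ) 1 := htS.1
      have hsI : s ∈ Ioo (-1:ℝ) 1 := hsS.1
      have hXh := hMh s hsI
      have hYh := hMh t htI
      have hc2ε : 2*ε < δ₀/2*(s-t) := by
        have := (div_lt_iff₀ hδ).mp hgap
        nlinarith
      have h1 : Lem52.eigCount (M s) ε ≤
          (Finset.univ.filter fun j => hYh.eigenvalues j ≤ ε - δ₀/2*(s-t)).card := by
        rw [Lem52.eigCount_eq hXh]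
        exact Lem52.count_le hXh hYh (δ₀/2*(s-t)) ε (fun v => hcomp t htI s hsI hts v)
      have h2 : (Finset.univ.filter fun j => hYh.eigenvalues j ≤ ε - δ₀/2*(s-t)).card <
          Lem52.eigCount (M t) ε := by
        rw [Lem52.eigCount_eq hYh]
        apply Finset.card_lt_card
        obtain ⟨j₀, hj₀⟩ := Lem52.exists_small_eig hYh hε htS.2
        rw [abs_le] at hj₀
        constructor
        · apply Finset.monotone_filter_right
          intro j _ hj
          have : ε - δ₀/2*(s-t) ≤ ε := by linarith
          exact le_trans hj this
        · intro hsub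
          have := hsub (Finset.mem_filter.mpr ⟨Finset.mem_univ j₀, hj₀.2⟩)
          rw [Finset.mem_filter] at this
          linarith [this.2]
      omega
    -- covering argument
    have hcover : S ⊆ ⋃ k : Fin (N+1), {u ∈ S | Lem52.eigCount (M u) ε = (k : ℕ)} := by
      intro u hu
      have hle := Lem52.eigCount_le (M u) ε
      exact Set.mem_iUnion.mpr ⟨⟨Lem52.eigCount (M u) ε, by omega⟩, hu, rfl⟩
    have hk : ∀ k : Fin (N+1),
        MeasureTheory.volume {u ∈ S | Lem52.eigCount (M u) ε = (k : ℕ)} ≤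
          ENNReal.ofReal (2*(4*ε/δ₀)) := by
      intro k
      rcases Set.eq_empty_or_nonempty {u ∈ S | Lem52.eigCount (M u) ε = (k : ℕ)} with he | hne
      · rw [he]; simp
      · obtain ⟨t₀, ht₀⟩ := hne
        have hsubI : {u ∈ S | Lem52.eigCount (M u) ε = (k : ℕ)} ⊆
            Icc (t₀ - 4*ε/δ₀) (t₀ + 4*ε/δ₀) := by
          intro u hu
          have hb1 : u - t₀ ≤ 4*ε/δ₀ := by
            by_contra h'
            push_neg at h'
            have hL0 : (0:ℝ) ≤ 4*ε/δ₀ := by positivity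
            have := hstep t₀ ht₀.1 u hu.1 (by linarith) h'
            rw [hu.2, ht₀.2] at this
            exact lt_irrefl _ this
          have hb2 : t₀ - u ≤ 4*ε/δ₀ := by
            by_contra h'
            push_neg at h'
            have hL0 : (0:ℝ) ≤ 4*ε/δ₀ := by positivity
            have := hstep u hu.1 t₀ ht₀.1 (by linarith) h'
            rw [hu.2, ht₀.2] at this
            exact lt_irrefl _ this
          exact ⟨by linarith, by linarith⟩
        refine le_trans (MeasureTheory.measure_mono hsubI) ?_
        rw [Real.volume_Icc]
        apply ENNReal.ofReal_le_ofReal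
        ring_nf
        linarith
    calc MeasureTheory.volume S
        ≤ MeasureTheory.volume (⋃ k : Fin (N+1), {u ∈ S | Lem52.eigCount (M u) ε = (k : ℕ)}) :=
          MeasureTheory.measure_mono hcover
      _ ≤ ∑' k : Fin (N+1), MeasureTheory.volume {u ∈ S | Lem52.eigCount (M u) ε = (k : ℕ)} :=
          MeasureTheory.measure_iUnion_le _
      _ ≤ ∑' _k : Fin (N+1), ENNReal.ofReal (2*(4*ε/δ₀)) := ENNReal.tsum_le_tsum hk
      _ = (N+1 : ℕ) * ENNReal.ofReal (2*(4*ε/δ₀)) := by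
          rw [tsum_fintype]
          simp [Finset.sum_const, nsmul_eq_mul]
      _ ≤ ENNReal.ofReal (16 * N * ε / δ₀) := by
          rw [show ((N+1 : ℕ) : ENNReal) = ENNReal.ofReal ((N+1 : ℕ) : ℝ) from
              (ENNReal.ofReal_natCast _).symm,
            ← ENNReal.ofReal_mul (by positivity)]
          apply ENNReal.ofReal_le_ofReal
          have h1 : (1:ℝ) ≤ (N:ℝ) := by exact_mod_cast hN1
          have h2 : ((N+1 : ℕ) : ℝ) * (2*(4*ε/δ₀)) = ((N:ℝ)+1) * (8*ε) / δ₀ := by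
            push_cast; ring
          rw [h2, show (16 * (N:ℝ) * ε / δ₀) = 16*(N:ℝ)*ε/δ₀ from rfl]
          rw [div_le_div_iff₀ hδ hδ]
          nlinarith [mul_nonneg (mul_nonneg (by linarith : (0:ℝ) ≤ 2*(N:ℝ)-((N:ℝ)+1)) hε.le) hδ.le]
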